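/- arXiv:0811.4726 — 3 statements merged into one kernel-verified Lean document; each statement's English description precedes it below -/
import Mathlib

section
/- Let d ≥ 2 be composite with smallest prime factor l, set a = d/l, and assume n = 2, a ≥ 3. Then u(d) - u(l*) = ((a-2)/(2a-2))·(2d - a² - 2a + 3), where l* = d·l/(d - l) and u(e) = C(2 + d/e, 2) + e - 1 extended to real e. Consequently u(d) > u(l*) if and only if a ≤ 2l - 2. -/
theorem stmt_6 (d : ℕ) (hd : 2 ≤ d) (hd' : ¬ d.Prime) (l : ℕ) (hl : l = d.minFac)
    (a : ℕ) (ha : a = d / l) (ha3 : 3 ≤ a) :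
    (((d : ℚ) / d + 1) * ((d : ℚ) / d + 2) / 2 + d - 1)
      - (((d : ℚ) / ((d : ℚ) * l / ((d : ℚ) - l)) + 1)
          * ((d : ℚ) / ((d : ℚ) * l / ((d : ℚ) - l)) + 2) / 2
          + (d : ℚ) * l / ((d : ℚ) - l) - 1)
      = (((a : ℚ) - 2) / (2 * a - 2)) * (2 * d - a ^ 2 - 2 * a + 3) ∧
    ((((d : ℚ) / ((d : ℚ) * l / ((d : ℚ) - l)) + 1)
          * ((d : ℚ) / ((d : ℚ) * l / ((d : ℚ) - l)) + 2) / 2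
          + (d : ℚ) * l / ((d : ℚ) - l) - 1)
        < (((d : ℚ) / d + 1) * ((d : ℚ) / d + 2) / 2 + d - 1)
      ↔ a ≤ 2 * l - 2) := by
  have hl2 : 2 ≤ l := hl ▸ (Nat.minFac_prime (by omega)).two_le
  have hld : l ∣ d := hl ▸ Nat.minFac_dvd d
  have hda : d = l * a := by rw [ha]; exact (Nat.mul_div_cancel' hld).symm
  have hD : (d : ℚ) = (l : ℚ) * a := by rw [hda]; push_cast; ring
  have hA3 : (3 : ℚ) ≤ (a : ℚ) := by exact_mod_cast ha3
  have hL2 : (2 : ℚ) ≤ (l : ℚ) := by exact_mod_cast hl2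
  have hlne : (l : ℚ) ≠ 0 := by linarith
  have hane : (a : ℚ) - 1 ≠ 0 := by intro h; linarith
  have hdl : (d : ℚ) - l = (l : ℚ) * ((a : ℚ) - 1) := by rw [hD]; ring
  have hdlne : (d : ℚ) - l ≠ 0 := by
    rw [hdl]; exact mul_ne_zero hlne hane
  have hdne : (d : ℚ) ≠ 0 := by
    have : (0 : ℚ) < d := by rw [hD]; nlinarith
    linarith
  have h2a : (2 : ℚ) * a - 2 ≠ 0 := by intro h; linarith
  have key : (d : ℚ) / ((d : ℚ) * l / ((d : ℚ) - l)) = (a : ℚ) - 1 := by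
    rw [div_div_eq_mul_div, hdl, hD]
    field_simp
  have key2 : (d : ℚ) * l / ((d : ℚ) - l) = (a : ℚ) * l / ((a : ℚ) - 1) := by
    rw [hdl, hD]
    field_simp
  have heq : (((d : ℚ) / d + 1) * ((d : ℚ) / d + 2) / 2 + d - 1)
      - (((d : ℚ) / ((d : ℚ) * l / ((d : ℚ) - l)) + 1)
          * ((d : ℚ) / ((d : ℚ) * l / ((d : ℚ) - l)) + 2) / 2
          + (d : ℚ) * l / ((d : ℚ) - l) - 1)
      = (((a : ℚ) - 2) / (2 * a - 2)) * (2 * d - a ^ 2 - 2 * a + 3) := by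
    rw [key, key2, div_self hdne, hD]
    field_simp
    ring
  refine ⟨heq, ?_⟩
  rw [← sub_pos, heq]
  have hc : 0 < ((a : ℚ) - 2) / (2 * a - 2) := by
    apply div_pos <;> linarith
  constructor
  · intro h
    have hQ : 0 < 2 * (d : ℚ) - (a : ℚ) ^ 2 - 2 * a + 3 := by
      by_contra h'
      push_neg at h'
      nlinarith
    have hnat : a ^ 2 + 2 * a < 2 * d + 3 := by
      have : ((a : ℚ)) ^ 2 + 2 * a < 2 * d + 3 := by linarith
      exact_mod_cast this
    have h2l : a + 2 ≤ 2 * l := by nlinarith [hda]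
    omega
  · intro h
    have h2l : a + 2 ≤ 2 * l := by omega
    have hQ : 0 < 2 * (d : ℚ) - (a : ℚ) ^ 2 - 2 * a + 3 := by
      have : (a : ℚ) + 2 ≤ 2 * l := by exact_mod_cast h2l
      nlinarith [hD]
    positivity
end

section
/- For all integers r ≥ 2, a ≥ 2, m ≥ 2 with m dividing a, one has C(r - 1 + a, r) ≥ C(r + a/m, r) + m - 2. -/
theorem stmt_11 (r a m : ℕ) (hr : 2 ≤ r) (ha : 2 ≤ a) (hm : 2 ≤ m) (hma : m ∣ a) :
    (r + a / m).choose r + m - 2 ≤ (r - 1 + a).choose r := by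
  obtain ⟨b, rfl⟩ := hma
  have hb : 1 ≤ b := by nlinarith
  have hdiv : m * b / m = b := Nat.mul_div_cancel_left b (by omega)
  rw [hdiv]
  obtain ⟨t, rfl⟩ : ∃ t, r = t + 2 := ⟨r - 2, by omega⟩
  by_cases hab : m * b = 2
  · have hm2 : m = 2 ∧ b = 1 := by constructor <;> nlinarith
    obtain ⟨rfl, rfl⟩ := hm2
    have h1 : t + 2 - 1 + 2 * 1 = t + 2 + 1 := by omega
    rw [h1]
    omega
  · set a := m * b with ha_def
    have ha3 : 3 ≤ a := by omega
    have ha3' : 3 ≤ m * b := ha3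
    have hab2 : b + 2 ≤ a := by
      rw [ha_def]
      rcases eq_or_lt_of_le hb with h | h
      · rw [← h] at ha3' ⊢; omega
      · have h2b : 2 * b ≤ m * b := Nat.mul_le_mul_right b hm
        omega
    have h1 : t + 2 - 1 + a = (t + a) + 1 := by omega
    rw [h1, Nat.choose_succ_succ]
    have hc : (t + 1).succ = t + 2 := rfl
    rw [hc]
    have mono : (t + 2 + b).choose (t + 2) ≤ (t + a).choose (t + 2) :=
      Nat.choose_le_choose _ (by omega)
    have hsymm : (t + a).choose (t + 1) = (t + a).choose (a - 1) := by
      have h3 : a - 1 = (t + a) - (t + 1) := by omega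
      rw [h3, Nat.choose_symm (by omega)]
    have hlow : a ≤ (t + a).choose (a - 1) := by
      calc a = a.choose (a - 1) := by
              rw [Nat.choose_symm (by omega : 1 ≤ a), Nat.choose_one_right]
        _ ≤ (t + a).choose (a - 1) := Nat.choose_le_choose _ (by omega)
    have hma2 : m ≤ a := by
      rw [ha_def]; exact Nat.le_mul_of_pos_right m (by omega)
    omega
end

section
/- For integers k ≥ 2 and m ≥ 1, set e = 2km² + 2m² + 3m, e' = ke, and d = 2mke. Then e < e' and u(e) = u(e'), where u(x) = C(2 + d/x, 2) + x - 1. -/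
theorem stmt_18 (k m : ℕ) (hk : 2 ≤ k) (hm : 1 ≤ m)
    (e e' d : ℕ) (he : e = 2 * k * m ^ 2 + 2 * m ^ 2 + 3 * m) (he' : e' = k * e)
    (hd : d = 2 * m * k * e) :
    e < e' ∧
    ((d : ℚ) / e + 1) * ((d : ℚ) / e + 2) / 2 + e - 1
      = ((d : ℚ) / e' + 1) * ((d : ℚ) / e' + 2) / 2 + e' - 1 := by
  have hepos : 0 < e := by subst he; positivity
  constructor
  · subst he'
    calc e = 1 * e := (one_mul e).symm
    _ < k * e := by exact (Nat.mul_lt_mul_right hepos).mpr (by omega)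
  · have heQ : (e : ℚ) ≠ 0 := by exact_mod_cast hepos.ne'
    have hkQ : (k : ℚ) ≠ 0 := by exact_mod_cast (by omega : k ≠ 0)
    subst he' hd
    push_cast
    field_simp
    subst he
    push_cast
    ring
end
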